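/- Let q, β > 0, 0 < α < 1, n ∈ ℕ with n^{1-α} > 2, r ∈ ℕ, weights w_s ≥ 0 with ∑_{s=1}^r w_s = 1, and f : ℝ → ℝ bounded and continuous. Then for every x ∈ ℝ, |B̄_n(f)(x) - f(x)| ≤ ω(f, 1/n + n^{-α}) + 2(q + 1/q)‖f‖_∞ · e^{-β(n^{1-α} - 1)}. -/

import Mathlib

open MeasureTheory Filter Real

noncomputable def nu (q β x : ℝ) : ℝ :=
  (1 - q * Real.exp (-β * x)) / (1 + q * Real.exp (-β * x))

noncomputable def G (q β x : ℝ) : ℝ := (1/4) * (nu q β (x+1) - nu q β (x-1))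

noncomputable def Psi (q β x : ℝ) : ℝ := (G q β x + G (1/q) β x) / 2

noncomputable def omega (f : ℝ → ℝ) (θ : ℝ) : ℝ :=
  sSup {d : ℝ | ∃ x y : ℝ, |x - y| ≤ θ ∧ d = |f x - f y|}

noncomputable def supNorm (f : ℝ → ℝ) : ℝ := ⨆ x : ℝ, |f x|

noncomputable def Bbar (q β : ℝ) (n r : ℕ) (w : ℕ → ℝ) (f : ℝ → ℝ) (x : ℝ) : ℝ :=
  ∫ v : ℝ, (∑ s ∈ Finset.Icc 1 r, w s * f (v / n + s / (n * r))) *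
    Psi q β ((n : ℝ) * x - v)

open Set
namespace BbarAux

variable {q β : ℝ}

lemma denom_pos (hq : 0 < q) (β y : ℝ) : 0 < 1 + q * Real.exp (-β * y) := by positivity

lemma nu_mono (hq : 0 < q) (hβ : 0 < β) {a b : ℝ} (h : a ≤ b) : nu q β a ≤ nu q β b := by
  have hA : 0 < 1 + q * Real.exp (-β * a) := denom_pos hq β a
  have hB : 0 < 1 + q * Real.exp (-β * b) := denom_pos hq β b
  have hab : Real.exp (-β * b) ≤ Real.exp (-β * a) := by
    apply Real.exp_le_exp.2; nlinarith
  unfold nu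
  rw [div_le_div_iff₀ hA hB]
  nlinarith [Real.exp_pos (-β * a), Real.exp_pos (-β * b)]

lemma G_nonneg (hq : 0 < q) (hβ : 0 < β) (x : ℝ) : 0 ≤ G q β x := by
  have := nu_mono hq hβ (show x - 1 ≤ x + 1 by linarith) (β := β)
  unfold G; linarith

lemma Psi_nonneg (hq : 0 < q) (hβ : 0 < β) (x : ℝ) : 0 ≤ Psi q β x := by
  have h1 := G_nonneg hq hβ x
  have h2 := G_nonneg (show (0:ℝ) < 1/q by positivity) hβ x (β := β)
  unfold Psi; linarith

lemma nu_neg (hq : 0 < q) (β y : ℝ) : nu q β (-y) = -nu (1/q) β y := by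
  have e : Real.exp (-β * -y) = (Real.exp (-β * y))⁻¹ := by
    rw [show -β * -y = -(-β * y) by ring, Real.exp_neg]
  have ht0 : 0 < Real.exp (-β * y) := Real.exp_pos _
  unfold nu
  rw [e]
  field_simp
  ring

lemma G_neg (hq : 0 < q) (β x : ℝ) : G q β (-x) = G (1/q) β x := by
  unfold G
  have h1 : -x + 1 = -(x - 1) := by ring
  have h2 : -x - 1 = -(x + 1) := by ring
  rw [h1, h2, nu_neg hq, nu_neg hq]
  ring

lemma Psi_even (hq : 0 < q) (β x : ℝ) : Psi q β (-x) = Psi q β x := by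
  unfold Psi
  rw [G_neg hq, G_neg (show (0:ℝ) < 1/q by positivity)]
  rw [one_div_one_div]
  ring

lemma continuous_nu (hq : 0 < q) (β : ℝ) : Continuous (nu q β) := by
  apply Continuous.div (by fun_prop) (by fun_prop)
  exact fun x => ne_of_gt (denom_pos hq β x)

lemma continuous_G (hq : 0 < q) (β : ℝ) : Continuous (G q β) := by
  unfold G
  exact continuous_const.mul (((continuous_nu hq β).comp (by fun_prop)).sub
    ((continuous_nu hq β).comp (by fun_prop)))

lemma continuous_Psi (hq : 0 < q) (β : ℝ) : Continuous (Psi q β) := by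
  unfold Psi
  exact (((continuous_G hq β)).add (continuous_G (by positivity) β)).div_const 2

noncomputable def Haux (q β x : ℝ) : ℝ :=
  1/2 + (1/(2*β)) * (Real.log (1 + q * Real.exp (-β * (x+1)))
    - Real.log (1 + q * Real.exp (-β * (x-1))))

lemma hasDerivAt_log_term (hq : 0 < q) (hβ : 0 < β) (c x : ℝ) :
    HasDerivAt (fun x => Real.log (1 + q * Real.exp (-β * (x + c))))
      ((q * Real.exp (-β * (x + c)) * (-β)) / (1 + q * Real.exp (-β * (x + c)))) x := by
  have h1 : HasDerivAt (fun x : ℝ => -β * (x + c)) (-β) x := by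
    simpa using ((hasDerivAt_id x).add_const c).const_mul (-β)
  have h2 : HasDerivAt (fun x : ℝ => 1 + q * Real.exp (-β * (x + c)))
      (q * Real.exp (-β * (x + c)) * (-β)) x := by
    have := (h1.exp.const_mul q).const_add 1
    exact this.congr_deriv (by ring)
  exact h2.log (ne_of_gt (denom_pos hq β (x + c)))

lemma hasDerivAt_Haux (hq : 0 < q) (hβ : 0 < β) (x : ℝ) :
    HasDerivAt (Haux q β) (G q β x) x := by
  have h1 := hasDerivAt_log_term hq hβ 1 x
  have h2 := hasDerivAt_log_term hq hβ (-1) x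
  have h2' : HasDerivAt (fun x => Real.log (1 + q * Real.exp (-β * (x - 1))))
      ((q * Real.exp (-β * (x - 1)) * (-β)) / (1 + q * Real.exp (-β * (x - 1)))) x := by
    simpa [sub_eq_add_neg] using h2
  have h := ((h1.sub h2').const_mul (1/(2*β))).const_add (1/2)
  refine (show HasDerivAt (Haux q β) _ x from h).congr_deriv ?_
  symm
  unfold G nu
  have d1 := denom_pos hq β (x + 1)
  have d2 := denom_pos hq β (x - 1)
  field_simp
  ring

lemma tendsto_Haux_atTop (hq : 0 < q) (hβ : 0 < β) :
    Tendsto (Haux q β) atTop (nhds (1/2)) := by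
  have key : ∀ c : ℝ, Tendsto (fun x => Real.log (1 + q * Real.exp (-β * (x + c))))
      atTop (nhds 0) := by
    intro c
    have h1 : Tendsto (fun x : ℝ => -β * (x + c)) atTop atBot := by
      apply Tendsto.const_mul_atTop_of_neg (by linarith)
      exact tendsto_atTop_add_const_right _ c tendsto_id
    have h2 : Tendsto (fun x : ℝ => 1 + q * Real.exp (-β * (x + c))) atTop (nhds 1) := by
      have := (Real.tendsto_exp_atBot.comp h1).const_mul q
      simpa using this.const_add 1
    have := (Real.continuousAt_log (by norm_num : (1:ℝ) ≠ 0)).tendsto.comp h2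
    simpa [Function.comp_def] using this
  have k1 := key 1
  have k2 : Tendsto (fun x => Real.log (1 + q * Real.exp (-β * (x - 1)))) atTop (nhds 0) := by
    simpa [sub_eq_add_neg] using key (-1)
  have h := ((k1.sub k2).const_mul (1/(2*β))).const_add (1/2)
  rw [show (1:ℝ)/2 + 1/(2*β) * (0-0) = 1/2 by ring] at h
  exact h

lemma Haux_eq (hq : 0 < q) (hβ : 0 < β) (x : ℝ) :
    Haux q β x = -(1/2) + (1/(2*β)) * (Real.log (1 + (1/q) * Real.exp (β * (x+1)))
      - Real.log (1 + (1/q) * Real.exp (β * (x-1)))) := by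
  have key : ∀ y : ℝ, Real.log (1 + q * Real.exp (-β * y))
      = Real.log q + (-β * y) + Real.log (1 + (1/q) * Real.exp (β * y)) := by
    intro y
    have e1 : Real.exp (-β * y) * Real.exp (β * y) = 1 := by
      rw [← Real.exp_add]; ring_nf; exact Real.exp_zero
    have h2 : 0 < 1 + (1/q) * Real.exp (β * y) := by positivity
    have h3 : (0:ℝ) < q * Real.exp (-β * y) := by positivity
    have e : Real.exp (β * y) = (Real.exp (-β * y))⁻¹ := by
      rw [show β * y = -(-β * y) by ring, Real.exp_neg]
    have ht0 : 0 < Real.exp (-β * y) := Real.exp_pos _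
    have factored : 1 + q * Real.exp (-β * y)
        = (q * Real.exp (-β * y)) * (1 + (1/q) * Real.exp (β * y)) := by
      rw [e]; field_simp; ring
    rw [factored, Real.log_mul (ne_of_gt h3) (ne_of_gt h2),
      Real.log_mul (ne_of_gt hq) (Real.exp_ne_zero _), Real.log_exp]
  unfold Haux
  rw [key (x+1), key (x-1)]
  have hβ' : (2:ℝ) * β ≠ 0 := by positivity
  field_simp
  ring

lemma tendsto_Haux_atBot (hq : 0 < q) (hβ : 0 < β) :
    Tendsto (Haux q β) atBot (nhds (-(1/2))) := by
  have key : ∀ c : ℝ, Tendsto (fun x => Real.log (1 + (1/q) * Real.exp (β * (x + c))))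
      atBot (nhds 0) := by
    intro c
    have h1 : Tendsto (fun x : ℝ => β * (x + c)) atBot atBot := by
      apply Tendsto.const_mul_atBot hβ
      exact tendsto_atBot_add_const_right _ c tendsto_id
    have h2 : Tendsto (fun x : ℝ => 1 + (1/q) * Real.exp (β * (x + c))) atBot (nhds 1) := by
      have := (Real.tendsto_exp_atBot.comp h1).const_mul (1/q)
      simpa using this.const_add 1
    have := (Real.continuousAt_log (by norm_num : (1:ℝ) ≠ 0)).tendsto.comp h2
    simpa [Function.comp_def] using this
  have k1 := key 1
  have k2 : Tendsto (fun x => Real.log (1 + (1/q) * Real.exp (β * (x - 1)))) atBot (nhds 0) := by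
    simpa [sub_eq_add_neg] using key (-1)
  have h := ((k1.sub k2).const_mul (1/(2*β))).const_add (-(1/2))
  rw [show -(1/2) + 1/(2*β) * (0-0) = -(1/2:ℝ) by ring] at h
  have h' : Tendsto (fun x => -(1/2) + (1/(2*β)) * (Real.log (1 + (1/q) * Real.exp (β * (x+1)))
      - Real.log (1 + (1/q) * Real.exp (β * (x-1))))) atBot (nhds (-(1/2))) := h
  exact h'.congr (fun x => (Haux_eq hq hβ x).symm)

lemma integrableOn_G_Ioi (hq : 0 < q) (hβ : 0 < β) (a : ℝ) :
    IntegrableOn (G q β) (Set.Ioi a) :=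
  integrableOn_Ioi_deriv_of_nonneg' (fun x _ => hasDerivAt_Haux hq hβ x)
    (fun x _ => G_nonneg hq hβ x) (tendsto_Haux_atTop hq hβ)

lemma integral_G_Ioi (hq : 0 < q) (hβ : 0 < β) (a : ℝ) :
    ∫ x in Set.Ioi a, G q β x = 1/2 - Haux q β a :=
  integral_Ioi_of_hasDerivAt_of_nonneg' (fun x _ => hasDerivAt_Haux hq hβ x)
    (fun x _ => G_nonneg hq hβ x) (tendsto_Haux_atTop hq hβ)

lemma tail_G (hq : 0 < q) (hβ : 0 < β) (T : ℝ) :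
    ∫ x in Set.Ioi T, G q β x ≤ q * Real.exp (-β * (T - 1)) := by
  rw [integral_G_Ioi hq hβ]
  set u := q * Real.exp (-β * (T - 1)) with hu
  set v := q * Real.exp (-β * (T + 1)) with hv
  have hu0 : 0 < u := by rw [hu]; positivity
  have hv0 : 0 < v := by rw [hv]; positivity
  have hvu : v = u * Real.exp (-(2*β)) := by
    rw [hu, hv, mul_assoc, ← Real.exp_add]; ring_nf
  have hexp1 : Real.exp (-(2*β)) ≤ 1 := by
    rw [← Real.exp_zero]; exact Real.exp_le_exp.2 (by linarith)
  have hvu' : v ≤ u := by rw [hvu]; nlinarith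
  have heq : 1/2 - Haux q β T = (1/(2*β)) * (Real.log (1 + u) - Real.log (1 + v)) := by
    unfold Haux; rw [← hu, ← hv]; ring
  rw [heq]
  have hlog : Real.log (1 + u) - Real.log (1 + v) ≤ u - v := by
    rw [← Real.log_div (by positivity) (by positivity)]
    refine (Real.log_le_sub_one_of_pos (by positivity)).trans ?_
    rw [div_sub_one (by positivity)]
    rw [show 1 + u - (1 + v) = u - v by ring]
    exact div_le_self (by linarith) (by linarith)
  have huv2 : u - v ≤ u * (2*β) := by
    rw [hvu]; nlinarith [Real.add_one_le_exp (-(2*β))]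
  calc (1/(2*β)) * (Real.log (1 + u) - Real.log (1 + v))
      ≤ (1/(2*β)) * (u * (2*β)) := by
        apply mul_le_mul_of_nonneg_left (hlog.trans huv2) (by positivity)
    _ = u := by field_simp

noncomputable def Phi (q β x : ℝ) : ℝ := (Haux q β x + Haux (1/q) β x) / 2

lemma hasDerivAt_Phi (hq : 0 < q) (hβ : 0 < β) (x : ℝ) :
    HasDerivAt (Phi q β) (Psi q β x) x :=
  ((hasDerivAt_Haux hq hβ x).add (hasDerivAt_Haux (by positivity) hβ x)).div_const 2

lemma tendsto_Phi_atTop (hq : 0 < q) (hβ : 0 < β) :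
    Tendsto (Phi q β) atTop (nhds (1/2)) := by
  have h := ((tendsto_Haux_atTop hq hβ).add
    (tendsto_Haux_atTop (show (0:ℝ) < 1/q by positivity) hβ)).div_const 2
  rw [show ((1:ℝ)/2 + 1/2)/2 = 1/2 by norm_num] at h
  exact h

lemma tendsto_Phi_atBot (hq : 0 < q) (hβ : 0 < β) :
    Tendsto (Phi q β) atBot (nhds (-(1/2))) := by
  have h := ((tendsto_Haux_atBot hq hβ).add
    (tendsto_Haux_atBot (show (0:ℝ) < 1/q by positivity) hβ)).div_const 2
  have h2 : Tendsto (Phi q β) atBot (nhds ((-(1/2 : ℝ) + -(1/2))/2)) := h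
  norm_num at h2
  exact h2

lemma integrableOn_Psi_Ioi (hq : 0 < q) (hβ : 0 < β) (a : ℝ) :
    IntegrableOn (Psi q β) (Set.Ioi a) :=
  integrableOn_Ioi_deriv_of_nonneg' (fun x _ => hasDerivAt_Phi hq hβ x)
    (fun x _ => Psi_nonneg hq hβ x) (tendsto_Phi_atTop hq hβ)

lemma integral_Psi_Ioi (hq : 0 < q) (hβ : 0 < β) (a : ℝ) :
    ∫ x in Set.Ioi a, Psi q β x = 1/2 - Phi q β a :=
  integral_Ioi_of_hasDerivAt_of_nonneg' (fun x _ => hasDerivAt_Phi hq hβ x)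
    (fun x _ => Psi_nonneg hq hβ x) (tendsto_Phi_atTop hq hβ)

lemma integrableOn_Psi_Iic (hq : 0 < q) (hβ : 0 < β) (a : ℝ) :
    IntegrableOn (Psi q β) (Set.Iic a) := by
  rw [← Measure.map_neg_eq_self (volume : Measure ℝ)]
  have m : MeasurableEmbedding fun x : ℝ => -x := (Homeomorph.neg ℝ).measurableEmbedding
  rw [m.integrableOn_map_iff]
  simp_rw [Function.comp_def, neg_preimage, neg_Iic]
  have h := (integrableOn_Ici_iff_integrableOn_Ioi (by finiteness)).mpr (integrableOn_Psi_Ioi hq hβ (-a))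
  exact h.congr_fun (fun x _ => (Psi_even hq β x).symm) measurableSet_Ici

lemma integrable_Psi (hq : 0 < q) (hβ : 0 < β) : Integrable (Psi q β) := by
  rw [← integrableOn_univ, ← Set.Iic_union_Ioi (a := (0:ℝ))]
  exact (integrableOn_Psi_Iic hq hβ 0).union (integrableOn_Psi_Ioi hq hβ 0)

lemma integral_Psi (hq : 0 < q) (hβ : 0 < β) : ∫ x, Psi q β x = 1 := by
  have h := integral_of_hasDerivAt_of_tendsto (fun x => hasDerivAt_Phi hq hβ x)
    (integrable_Psi hq hβ) (tendsto_Phi_atBot hq hβ) (tendsto_Phi_atTop hq hβ)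
  rw [h]; norm_num

lemma tail_Psi_Ioi (hq : 0 < q) (hβ : 0 < β) (T : ℝ) :
    ∫ x in Set.Ioi T, Psi q β x ≤ (q + 1/q)/2 * Real.exp (-β * (T - 1)) := by
  have hq' : (0:ℝ) < 1/q := by positivity
  have hsplit : ∫ x in Set.Ioi T, Psi q β x
      = ((∫ x in Set.Ioi T, G q β x) + ∫ x in Set.Ioi T, G (1/q) β x)/2 := by
    rw [← integral_add (integrableOn_G_Ioi hq hβ T) (integrableOn_G_Ioi hq' hβ T),
      ← integral_div]
    rfl
  have t1 := tail_G hq hβ T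
  have t2 := tail_G hq' hβ T
  rw [hsplit]
  have : (q + 1/q)/2 * Real.exp (-β * (T - 1))
      = (q * Real.exp (-β * (T - 1)) + (1/q) * Real.exp (-β * (T - 1)))/2 := by ring
  rw [this]
  linarith

lemma tail_Psi_Iio (hq : 0 < q) (hβ : 0 < β) (T : ℝ) :
    ∫ x in Set.Iio (-T), Psi q β x ≤ (q + 1/q)/2 * Real.exp (-β * (T - 1)) := by
  have h1 : ∫ x in Set.Iio (-T), Psi q β x = ∫ x in Set.Iic (-T), Psi q β x :=
    (integral_Iic_eq_integral_Iio' (by simp)).symm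
  have h2 : ∫ x in Set.Iic (-T), Psi q β x = ∫ x in Set.Iic (-T), Psi q β (-x) :=
    setIntegral_congr_fun measurableSet_Iic (fun x _ => (Psi_even hq β x).symm)
  rw [h1, h2, integral_comp_neg_Iic, neg_neg]
  exact tail_Psi_Ioi hq hβ T

end BbarAux

open BbarAux

theorem Bbar_quantitative (q β α : ℝ) (hq : 0 < q) (hβ : 0 < β)
    (hα0 : 0 < α) (hα1 : α < 1) (n : ℕ) (hn : 2 < (n : ℝ) ^ (1 - α))
    (r : ℕ) (w : ℕ → ℝ) (hw : ∀ s, 0 ≤ w s) (hw1 : ∑ s ∈ Finset.Icc 1 r, w s = 1)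
    (f : ℝ → ℝ) (hf : Continuous f) (hfb : ∃ M : ℝ, ∀ x : ℝ, |f x| ≤ M) (x : ℝ) :
    |Bbar q β n r w f x - f x| ≤
      omega f (1 / n + (n : ℝ) ^ (-α)) +
        2 * (q + 1/q) * supNorm f * Real.exp (-β * ((n : ℝ) ^ (1 - α) - 1)) := by
  classical
  obtain ⟨M₀, hM₀⟩ := hfb
  have hq' : (0:ℝ) < 1/q := by positivity
  -- basic facts about n and r
  have hn0 : (0:ℝ) < (n:ℝ) := by
    rcases Nat.eq_zero_or_pos n with h | h
    · exfalso
      rw [h] at hn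
      push_cast at hn
      rw [Real.zero_rpow (by linarith : 1 - α ≠ 0)] at hn
      linarith
    · exact_mod_cast h
  have hn1 : (1:ℝ) ≤ (n:ℝ) := by
    by_contra h
    push_neg at h
    have : (n:ℝ) ^ (1-α) ≤ 1 := Real.rpow_le_one (le_of_lt hn0) h.le (by linarith)
    linarith
  have hr : 1 ≤ r := by
    by_contra h
    push_neg at h
    interval_cases r
    simp at hw1
  have hr0 : (0:ℝ) < (r:ℝ) := by exact_mod_cast hr
  set N : ℝ := (n:ℝ) with hN
  set T : ℝ := N ^ (1 - α) with hT
  set θ : ℝ := 1/N + N ^ (-α) with hθdef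
  have hT2 : 2 < T := hn
  have hTN : T / N = N ^ (-α) := by
    rw [hT, show (1:ℝ) - α = -α + 1 by ring, Real.rpow_add hn0, Real.rpow_one]
    field_simp
  have hθ0 : 0 < θ := by
    rw [hθdef]
    have := Real.rpow_pos_of_pos hn0 (-α)
    positivity
  -- supNorm facts
  have hbdd : BddAbove (Set.range fun y => |f y|) := ⟨M₀, by rintro _ ⟨y, rfl⟩; exact hM₀ y⟩
  have hM : ∀ y, |f y| ≤ supNorm f := fun y => le_ciSup hbdd y
  have hM0 : 0 ≤ supNorm f := le_trans (abs_nonneg (f 0)) (hM 0)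
  -- omega facts
  have hSbdd : BddAbove {d : ℝ | ∃ a b : ℝ, |a - b| ≤ θ ∧ d = |f a - f b|} := by
    refine ⟨2 * supNorm f, ?_⟩
    rintro d ⟨a, b, hab, rfl⟩
    calc |f a - f b| ≤ |f a| + |f b| := abs_sub _ _
      _ ≤ 2 * supNorm f := by have := hM a; have := hM b; linarith
  have homega_le : ∀ a b : ℝ, |a - b| ≤ θ → |f a - f b| ≤ omega f θ := fun a b h =>
    le_csSup hSbdd ⟨a, b, h, rfl⟩
  have homega0 : 0 ≤ omega f θ := by
    have := homega_le x x (by simp [le_of_lt hθ0])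
    simpa using this
  -- kernel facts
  have hΨc : Continuous (Psi q β) := continuous_Psi hq β
  have hΨ0 : ∀ u, 0 ≤ Psi q β u := Psi_nonneg hq hβ
  have hΨint : Integrable (Psi q β) := integrable_Psi hq hβ
  have hΨ1 : ∫ u, Psi q β u = 1 := integral_Psi hq hβ
  -- the averaged function
  set c : ℝ := N * x with hc
  set g : ℝ → ℝ := fun v => ∑ s ∈ Finset.Icc 1 r, w s * f (v / N + s / (N * r)) with hgdef
  have hgcont : Continuous g := by
    apply continuous_finset_sum
    intro s _
    exact continuous_const.mul (hf.comp (by fun_prop))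
  have hgbd : ∀ v, |g v| ≤ supNorm f := by
    intro v
    calc |g v| ≤ ∑ s ∈ Finset.Icc 1 r, |w s * f (v / N + s / (N * r))| :=
          Finset.abs_sum_le_sum_abs _ _
      _ ≤ ∑ s ∈ Finset.Icc 1 r, w s * supNorm f := by
          apply Finset.sum_le_sum
          intro s _
          rw [abs_mul, abs_of_nonneg (hw s)]
          exact mul_le_mul_of_nonneg_left (hM _) (hw s)
      _ = supNorm f := by rw [← Finset.sum_mul, hw1, one_mul]
  -- rewrite Bbar via substitution
  have hBbar : Bbar q β n r w f x = ∫ u, g (c - u) * Psi q β u := by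
    have h0 : Bbar q β n r w f x = ∫ v, g v * Psi q β (c - v) := rfl
    rw [h0, ← integral_sub_left_eq_self (fun u => g (c - u) * Psi q β u) volume c]
    congr 1
    ext v
    simp
  -- integrability
  have hFint : Integrable (fun u => g (c - u) * Psi q β u) := by
    apply Integrable.mono' (hΨint.const_mul (supNorm f))
    · exact ((hgcont.comp (continuous_const.sub continuous_id)).mul hΨc).aestronglyMeasurable
    · filter_upwards with u
      rw [Real.norm_eq_abs, abs_mul, abs_of_nonneg (hΨ0 u)]
      exact mul_le_mul_of_nonneg_right (hgbd _) (hΨ0 u)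
  have hHint : Integrable (fun u => (g (c - u) - f x) * Psi q β u) := by
    have : (fun u => (g (c - u) - f x) * Psi q β u)
        = fun u => g (c - u) * Psi q β u - f x * Psi q β u := by ext u; ring
    rw [this]
    exact hFint.sub (hΨint.const_mul (f x))
  have hAcont : Continuous (fun u => |g (c - u) - f x| * Psi q β u) :=
    (((hgcont.comp (continuous_const.sub continuous_id)).sub continuous_const).abs).mul hΨc
  have hAint : Integrable (fun u => |g (c - u) - f x| * Psi q β u) := by
    apply Integrable.mono' (hΨint.const_mul (2 * supNorm f)) hAcont.aestronglyMeasurable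
    filter_upwards with u
    rw [Real.norm_eq_abs, abs_mul, abs_abs, abs_of_nonneg (hΨ0 u)]
    apply mul_le_mul_of_nonneg_right _ (hΨ0 u)
    calc |g (c - u) - f x| ≤ |g (c - u)| + |f x| := abs_sub _ _
      _ ≤ 2 * supNorm f := by have := hgbd (c - u); have := hM x; linarith
  -- key representation
  have key : Bbar q β n r w f x - f x = ∫ u, (g (c - u) - f x) * Psi q β u := by
    rw [hBbar]
    have : (fun u => (g (c - u) - f x) * Psi q β u)
        = fun u => g (c - u) * Psi q β u - f x * Psi q β u := by ext u; ring
    rw [this, integral_sub hFint (hΨint.const_mul (f x)), integral_const_mul, hΨ1]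
    ring
  rw [key]
  -- bound by integral of absolute value
  have habs : |∫ u, (g (c - u) - f x) * Psi q β u|
      ≤ ∫ u, |g (c - u) - f x| * Psi q β u := by
    have h1 := norm_integral_le_integral_norm
      (fun u => (g (c - u) - f x) * Psi q β u) (μ := volume)
    simp only [Real.norm_eq_abs] at h1
    refine h1.trans (le_of_eq ?_)
    congr 1
    ext u
    rw [abs_mul, abs_of_nonneg (hΨ0 u)]
  refine habs.trans ?_
  -- split the integral
  have hsplit : ∫ u, |g (c - u) - f x| * Psi q β u
      = (∫ u in Set.Icc (-T) T, |g (c - u) - f x| * Psi q β u)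
        + ∫ u in (Set.Icc (-T) T)ᶜ, |g (c - u) - f x| * Psi q β u :=
    (integral_add_compl measurableSet_Icc hAint).symm
  rw [hsplit]
  -- bound on the central part
  have hb1 : ∫ u in Set.Icc (-T) T, |g (c - u) - f x| * Psi q β u ≤ omega f θ := by
    have step1 : ∫ u in Set.Icc (-T) T, |g (c - u) - f x| * Psi q β u
        ≤ ∫ u in Set.Icc (-T) T, omega f θ * Psi q β u := by
      apply setIntegral_mono_on hAint.integrableOn
        ((hΨint.const_mul (omega f θ)).integrableOn) measurableSet_Icc
      intro u hu
      apply mul_le_mul_of_nonneg_right _ (hΨ0 u)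
      -- pointwise modulus bound
      have hdiff : g (c - u) - f x
          = ∑ s ∈ Finset.Icc 1 r, w s * (f ((c - u) / N + s / (N * r)) - f x) := by
        have h1 : g (c - u) = ∑ s ∈ Finset.Icc 1 r, w s * f ((c - u) / N + s / (N * r)) := by
          rw [hgdef]
        have h2 : ∑ s ∈ Finset.Icc 1 r, w s * (f ((c - u) / N + s / (N * r)) - f x)
            = (∑ s ∈ Finset.Icc 1 r, w s * f ((c - u) / N + s / (N * r)))
              - (∑ s ∈ Finset.Icc 1 r, w s) * f x := by
          rw [Finset.sum_mul, ← Finset.sum_sub_distrib]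
          exact Finset.sum_congr rfl fun s _ => by ring
        rw [h1, h2, hw1, one_mul]
      rw [hdiff]
      calc |∑ s ∈ Finset.Icc 1 r, w s * (f ((c - u) / N + s / (N * r)) - f x)|
          ≤ ∑ s ∈ Finset.Icc 1 r, |w s * (f ((c - u) / N + s / (N * r)) - f x)| :=
            Finset.abs_sum_le_sum_abs _ _
        _ ≤ ∑ s ∈ Finset.Icc 1 r, w s * omega f θ := by
            apply Finset.sum_le_sum
            intro s hs
            rw [abs_mul, abs_of_nonneg (hw s)]
            apply mul_le_mul_of_nonneg_left _ (hw s)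
            apply homega_le
            have hs1 : 1 ≤ s := (Finset.mem_Icc.1 hs).1
            have hsr : s ≤ r := (Finset.mem_Icc.1 hs).2
            have hs0 : (0:ℝ) < (s:ℝ) := by exact_mod_cast hs1
            have hsr' : (s:ℝ) ≤ (r:ℝ) := by exact_mod_cast hsr
            have harg : (c - u) / N + s / (N * r) - x = -u / N + s / (N * r) := by
              rw [hc]
              field_simp
              ring
            rw [harg]
            have h1 : |(-u / N + s / (N * r))| ≤ |u| / N + s / (N * r) := by
              refine (abs_add_le _ _).trans ?_
              rw [abs_div, abs_neg, abs_of_pos hn0]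
              have : |(s:ℝ) / (N * r)| = s / (N * r) := by
                rw [abs_of_pos]
                positivity
              rw [this]
            refine h1.trans ?_
            have h2 : |u| ≤ T := abs_le.2 ⟨hu.1, hu.2⟩
            have h3 : |u| / N ≤ N ^ (-α) := by
              rw [← hTN]
              gcongr
            have h4 : (s:ℝ) / (N * r) ≤ 1 / N := by
              rw [div_le_div_iff₀ (by positivity) hn0]
              nlinarith
            rw [hθdef]
            linarith
        _ = omega f θ := by rw [← Finset.sum_mul, hw1, one_mul]
    refine step1.trans ?_
    rw [integral_const_mul]
    have h5 : ∫ u in Set.Icc (-T) T, Psi q β u ≤ 1 := by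
      rw [← hΨ1]
      exact setIntegral_le_integral hΨint (ae_of_all _ hΨ0)
    calc omega f θ * ∫ u in Set.Icc (-T) T, Psi q β u ≤ omega f θ * 1 :=
        mul_le_mul_of_nonneg_left h5 homega0
      _ = omega f θ := mul_one _
  -- bound on the tail part
  have hb2 : ∫ u in (Set.Icc (-T) T)ᶜ, |g (c - u) - f x| * Psi q β u
      ≤ 2 * (q + 1/q) * supNorm f * Real.exp (-β * (T - 1)) := by
    have step1 : ∫ u in (Set.Icc (-T) T)ᶜ, |g (c - u) - f x| * Psi q β u
        ≤ ∫ u in (Set.Icc (-T) T)ᶜ, (2 * supNorm f) * Psi q β u := by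
      apply setIntegral_mono_on hAint.integrableOn
        ((hΨint.const_mul _).integrableOn) measurableSet_Icc.compl
      intro u _
      apply mul_le_mul_of_nonneg_right _ (hΨ0 u)
      calc |g (c - u) - f x| ≤ |g (c - u)| + |f x| := abs_sub _ _
        _ ≤ 2 * supNorm f := by have := hgbd (c - u); have := hM x; linarith
    refine step1.trans ?_
    rw [integral_const_mul]
    have hcompl : (Set.Icc (-T) T)ᶜ = Set.Iio (-T) ∪ Set.Ioi T := by
      ext u
      simp only [Set.mem_compl_iff, Set.mem_Icc, Set.mem_union, Set.mem_Iio, Set.mem_Ioi,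
        not_and_or, not_le]
    have htail : ∫ u in (Set.Icc (-T) T)ᶜ, Psi q β u
        ≤ (q + 1/q) * Real.exp (-β * (T - 1)) := by
      rw [hcompl]
      rw [setIntegral_union ((Set.Iio_disjoint_Ici (by linarith : -T ≤ T)).mono_right
          Set.Ioi_subset_Ici_self) measurableSet_Ioi
        ((integrableOn_Psi_Iic hq hβ (-T)).mono_set Set.Iio_subset_Iic_self)
        (integrableOn_Psi_Ioi hq hβ T)]
      have t1 := tail_Psi_Iio hq hβ T
      have t2 := tail_Psi_Ioi hq hβ T
      linarith
    calc 2 * supNorm f * ∫ u in (Set.Icc (-T) T)ᶜ, Psi q β u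
        ≤ 2 * supNorm f * ((q + 1/q) * Real.exp (-β * (T - 1))) := by
          apply mul_le_mul_of_nonneg_left htail (by positivity)
      _ = 2 * (q + 1/q) * supNorm f * Real.exp (-β * (T - 1)) := by ring
  linarith
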